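/- Let N ≥ 1, L ∈ ℤ, and let q : Fin N → ℤ satisfy q_i ≥ 1 for all i and Σ_i q_i = L. Then Σ_i ((q_i : ℝ) − L/N)² ≤ (L − N)²·N/4. -/

import Mathlib

/-- Bound on the Lyapunov function `V(q) = Σ_i (q_i − q̄)²` over all admissible states:
entries are integers, at least 1, and sum to `L`. -/
theorem stmt10 (N : ℕ) (hN : 1 ≤ N) (L : ℤ) (q : Fin N → ℤ)
    (hq1 : ∀ i, 1 ≤ q i) (hsum : ∑ i, q i = L) :
    ∑ i, ((q i : ℝ) - (L : ℝ) / (N : ℝ)) ^ 2 ≤ ((L : ℝ) - (N : ℝ)) ^ 2 * (N : ℝ) / 4 := by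
  have h1n : (1:ℝ) ≤ (N:ℝ) := by exact_mod_cast hN
  have hn0 : (0:ℝ) < (N:ℝ) := lt_of_lt_of_le one_pos h1n
  have hn' : (N:ℝ) ≠ 0 := ne_of_gt hn0
  set n : ℝ := (N:ℝ) with hn
  set M : ℝ := (L:ℝ) - n with hMdef
  have hsumR : ∑ i, ((q i : ℝ)) = (L:ℝ) := by exact_mod_cast congrArg (Int.cast : ℤ → ℝ) hsum
  have hsum' : ∑ i, ((q i : ℝ) - 1) = M := by
    rw [Finset.sum_sub_distrib, hsumR]
    simp [hMdef, hn]
  have hx0 : ∀ i, (0:ℝ) ≤ (q i : ℝ) - 1 := by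
    intro i
    have := hq1 i
    have : (1:ℝ) ≤ (q i : ℝ) := by exact_mod_cast this
    linarith
  have hMnn : 0 ≤ M := hsum' ▸ Finset.sum_nonneg (fun i _ => hx0 i)
  have hxle : ∀ i, (q i : ℝ) - 1 ≤ M := by
    intro i
    calc (q i : ℝ) - 1 ≤ ∑ j, ((q j : ℝ) - 1) :=
          Finset.single_le_sum (fun j _ => hx0 j) (Finset.mem_univ i)
      _ = M := hsum'
  have hS : ∑ i, ((q i : ℝ) - 1)^2 ≤ M * M := by
    calc ∑ i, ((q i : ℝ) - 1)^2 ≤ ∑ i, ((q i : ℝ) - 1) * M :=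
          Finset.sum_le_sum (fun i _ => by nlinarith [hx0 i, hxle i])
      _ = M * M := by rw [← Finset.sum_mul, hsum']
  have hterm : ∀ i, ((q i : ℝ) - (L:ℝ)/n)^2
      = ((q i : ℝ) - 1)^2 - 2*(M/n)*((q i : ℝ) - 1) + (M/n)^2 := by
    intro i
    have hc : (L:ℝ)/n = M/n + 1 := by
      field_simp [hMdef]
      linarith [hMdef]
    rw [hc]; ring
  have hexp : ∑ i, ((q i : ℝ) - (L:ℝ)/n)^2
      = ∑ i, ((q i : ℝ) - 1)^2 - 2*(M/n)*M + n*(M/n)^2 := by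
    rw [Finset.sum_congr rfl (fun i _ => hterm i)]
    rw [Finset.sum_add_distrib, Finset.sum_sub_distrib, ← Finset.mul_sum, hsum',
      Finset.sum_const, Finset.card_univ, Fintype.card_fin]
    ring
  rw [hexp]
  have h2 : 2*(M/n)*M - n*(M/n)^2 = M^2/n := by
    field_simp; ring
  have h4 : M^2*n/4 + M^2/n - M*M = M^2*(n-2)^2/(4*n) := by
    field_simp; ring
  have h5 : (0:ℝ) ≤ M^2*(n-2)^2/(4*n) := by positivity
  nlinarith [hS, h2, h4, h5]
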